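/- Let A and B be infinite finitely generated groups and let G = A × B, with finite generating set S (for instance S_A × {1} ∪ {1} × S_B for finite generating sets S_A of A and S_B of B). Then for every Floyd function f, the Floyd boundary of the Cayley graph Cay(G,S) based at the identity consists of exactly one point. -/

import Mathlib

open Filter
open scoped ENNReal

universe u

namespace FloydPaper

/-- A **Floyd function**: `f : {1,2,...} → (0,∞)` (modelled as `f : ℕ → ℝ` with `f 0 := f 1`)
such that there is `K ≥ 1` with `1 ≤ f n / f (n+1) ≤ K` for all `n ≥ 1`, and `∑ f n < ∞`. -/
structure IsFloydFunction (f : ℕ → ℝ) : Prop where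
  pos : ∀ n : ℕ, 0 < f n
  zero_eq : f 0 = f 1
  ratio : ∃ K : ℝ, 1 ≤ K ∧ ∀ n : ℕ, 1 ≤ n → 1 ≤ f n / f (n + 1) ∧ f n / f (n + 1) ≤ K
  summable : Summable fun n : ℕ => f (n + 1)

variable {V : Type u}

/-- The Floyd length of an (oriented) edge: `f` applied to the graph distance from the
basepoint `b` to the nearer endpoint of the edge. -/
noncomputable def edgeFloydLength (G : SimpleGraph V) (f : ℕ → ℝ) (b : V) (e : G.Dart) : ℝ :=
  f (min (G.dist b e.toProd.1) (G.dist b e.toProd.2))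

/-- The Floyd length of an edge path (walk): the sum of the Floyd lengths of its edges. -/
noncomputable def floydLength (G : SimpleGraph V) (f : ℕ → ℝ) (b : V) {u v : V}
    (p : G.Walk u v) : ℝ :=
  (p.darts.map (edgeFloydLength G f b)).sum

/-- The Floyd distance between two vertices: the infimum of the Floyd lengths of edge paths
joining them. -/
noncomputable def floydDist (G : SimpleGraph V) (f : ℕ → ℝ) (b : V) (u v : V) : ℝ :=
  sInf {L : ℝ | ∃ p : G.Walk u v, floydLength G f b p = L}

/-- An edge path `p` is a `C`-quasi-geodesic if for all vertices `v, v'` on `p`,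
`(1/C) d(v,v') - C ≤ |p(v,v')| ≤ C d(v,v') + C`, where `|p(v,v')|` is the number of edges of
the subpath of `p` between them. -/
def IsQuasiGeodesicWalk (G : SimpleGraph V) (C : ℝ) {u v : V} (p : G.Walk u v) : Prop :=
  ∀ i j : ℕ, i ≤ j → j ≤ p.length →
    (1 / C) * (G.dist (p.getVert i) (p.getVert j) : ℝ) - C ≤ ((j : ℝ) - (i : ℝ)) ∧
      ((j : ℝ) - (i : ℝ)) ≤ C * (G.dist (p.getVert i) (p.getVert j) : ℝ) + C

/-- A sequence of vertices escapes to infinity if it eventually leaves every ball about the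
basepoint. -/
def Escapes (G : SimpleGraph V) (b : V) (s : ℕ → V) : Prop :=
  ∀ n : ℕ, ∃ N : ℕ, ∀ m : ℕ, N ≤ m → n < G.dist b (s m)

/-- A sequence of vertices is Cauchy for the Floyd distance. -/
def IsFloydCauchy (G : SimpleGraph V) (f : ℕ → ℝ) (b : V) (s : ℕ → V) : Prop :=
  ∀ ε : ℝ, 0 < ε → ∃ N : ℕ, ∀ m n : ℕ, N ≤ m → N ≤ n →
    floydDist G f b (s m) (s n) < ε

/-- The sequences representing points of the Floyd boundary: Floyd-Cauchy sequences escaping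
to infinity (for an infinite, connected, locally finite graph these are exactly the Cauchy
sequences with no limit in the vertex set, since vertices are isolated in the Floyd metric). -/
def BoundarySeq (G : SimpleGraph V) (f : ℕ → ℝ) (b : V) : Type u :=
  {s : ℕ → V // IsFloydCauchy G f b s ∧ Escapes G b s}

/-- Two boundary sequences represent the same boundary point iff the Floyd distance between
them tends to `0`. -/
def BoundaryRel (G : SimpleGraph V) (f : ℕ → ℝ) (b : V)
    (s t : BoundarySeq G f b) : Prop :=
  Tendsto (fun n => floydDist G f b (s.1 n) (t.1 n)) atTop (nhds 0)

/-- The Floyd boundary `∂_f X`: the set of points of the Cauchy completion of the vertex set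
with the Floyd metric which do not lie in the vertex set. -/
def FloydBoundary (G : SimpleGraph V) (f : ℕ → ℝ) (b : V) : Type u :=
  Quot (BoundaryRel G f b)

/-- The Floyd boundary consists of exactly one point. -/
def FloydBoundaryOnePoint (G : SimpleGraph V) (f : ℕ → ℝ) (b : V) : Prop :=
  ∃ p : FloydBoundary G f b, ∀ q : FloydBoundary G f b, q = p

/-- The Floyd boundary is trivial: it has at most two points. -/
def FloydBoundaryTrivial (G : SimpleGraph V) (f : ℕ → ℝ) (b : V) : Prop :=
  ∀ p q r : FloydBoundary G f b, p = q ∨ p = r ∨ q = r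

/-- The divergence function `Div_{X,γ,δ}(n)` of a graph: the sup over triples `x, y, c` of
vertices with `r := d(c,{x,y}) > 0` and `d(x,y) ≤ n` of the infimum of the lengths of edge
paths from `x` to `y` avoiding the ball of radius `δr - γ` about `c` (`∞` if none exists). -/
noncomputable def graphDivergence (G : SimpleGraph V) (γ δ : ℝ) (n : ℕ) : ℝ≥0∞ :=
  ⨆ x : V, ⨆ y : V, ⨆ c : V,
    ⨆ _ : 0 < min (G.dist c x) (G.dist c y) ∧ G.dist x y ≤ n,
      ⨅ p : {p : G.Walk x y // ∀ z ∈ p.support,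
          δ * (↑(min (G.dist c x) (G.dist c y)) : ℝ) - γ < (G.dist c z : ℝ)},
        (p.1.length : ℝ≥0∞)

/-- `α : ℝ → X` is a (bi-infinite) `C`-quasi-geodesic for the distance function `d`. -/
def IsQuasiGeodesicMap {X : Type u} (d : X → X → ℝ) (C : ℝ) (α : ℝ → X) : Prop :=
  ∀ s t : ℝ, (1 / C) * |s - t| - C ≤ d (α s) (α t) ∧ d (α s) (α t) ≤ C * |s - t| + C

/-- `α : [0,∞) → X` is a `C`-quasi-geodesic ray for the distance function `d`. -/
def IsQuasiGeodesicRay {X : Type u} (d : X → X → ℝ) (C : ℝ) (α : ℝ → X) : Prop :=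
  ∀ s t : ℝ, 0 ≤ s → 0 ≤ t →
    (1 / C) * |s - t| - C ≤ d (α s) (α t) ∧ d (α s) (α t) ≤ C * |s - t| + C

/-- The length of a discrete path (chain) in a space with distance function `d`. -/
noncomputable def chainLength {X : Type u} (d : X → X → ℝ) (p : List X) : ℝ :=
  ((p.zip p.tail).map fun q => d q.1 q.2).sum

/-- The divergence function of a metric space (with distance function `d`), where paths are
taken to be discrete paths with steps of size at most `1` (for a graph these correspond to
edge paths). -/
noncomputable def divergence {X : Type u} (d : X → X → ℝ) (γ δ : ℝ) (n : ℕ) : ℝ≥0∞ :=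
  ⨆ x : X, ⨆ y : X, ⨆ c : X,
    ⨆ _ : 0 < min (d c x) (d c y) ∧ d x y ≤ (n : ℝ),
      ⨅ p : {p : List X // p.Chain' (fun w z => d w z ≤ 1) ∧ p.head? = some x ∧
          p.getLast? = some y ∧ ∀ z ∈ p, δ * min (d c x) (d c y) - γ < d c z},
        ENNReal.ofReal (chainLength d p.1)

/-- A space is `C`-wide if every point is within `C` of a bi-infinite `C`-quasi-geodesic and
its divergence is bounded above by a linear function for some `0 < δ < 1`, `γ ≥ 0`. -/
def IsWide (X : Type u) (d : X → X → ℝ) (C : ℝ) : Prop :=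
  (∀ x : X, ∃ α : ℝ → X, IsQuasiGeodesicMap d C α ∧ ∃ t : ℝ, d x (α t) ≤ C) ∧
  ∃ δ γ : ℝ, 0 < δ ∧ δ < 1 ∧ 0 ≤ γ ∧
    ∃ A B : ℝ, ∀ n : ℕ, divergence d γ δ n ≤ ENNReal.ofReal (A * n + B)

/-- The induced distance function on a subset. -/
def restrictDist {X : Type u} (d : X → X → ℝ) (Y : Set X) : ↥Y → ↥Y → ℝ :=
  fun a b => d a b

/-- A subset has infinite diameter. -/
def InfiniteDiam {X : Type u} (d : X → X → ℝ) (S : Set X) : Prop :=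
  ∀ M : ℝ, ∃ x ∈ S, ∃ y ∈ S, M < d x y

/-- `X` is `C`-thick of order at most `k`: thick of order `0` means wide, and thick of order
at most `k+1` means there is a collection `𝒴` of subsets whose `C`-neighborhoods cover `X`,
each of which is `C`-thick of order at most `k` in the induced metric, and any two of which
are connected by a finite chain of members of `𝒴` with consecutive ones having
infinite-diameter intersection `N_C(Y_i) ∩ Y_{i+1}`. -/
def IsThickLE : ℕ → (X : Type u) → (X → X → ℝ) → ℝ → Prop
  | 0, X, d, C => IsWide X d C
  | k + 1, X, d, C =>
      ∃ 𝒴 : Set (Set X),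
        (∀ x : X, ∃ Y ∈ 𝒴, ∃ y ∈ Y, d x y ≤ C) ∧
        (∀ Y ∈ 𝒴, IsThickLE k ↥Y (restrictDist d Y) C) ∧
        ∀ Y ∈ 𝒴, ∀ Y' ∈ 𝒴, ∃ m : ℕ, ∃ c : Fin (m + 1) → Set X,
          (∀ i, c i ∈ 𝒴) ∧ c 0 = Y ∧ c (Fin.last m) = Y' ∧
          ∀ i : Fin m, InfiniteDiam d
            ({x : X | ∃ y ∈ c i.castSucc, d x y ≤ C} ∩ c i.succ)

/-- `X` is `C`-thick of order at most `k ≥ 1` **with respect to** the collection `𝒴`. -/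
def IsThickCollection (X : Type u) (d : X → X → ℝ) (C : ℝ) (k : ℕ) (𝒴 : Set (Set X)) : Prop :=
  (∀ x : X, ∃ Y ∈ 𝒴, ∃ y ∈ Y, d x y ≤ C) ∧
  (∀ Y ∈ 𝒴, IsThickLE (k - 1) ↥Y (restrictDist d Y) C) ∧
  ∀ Y ∈ 𝒴, ∀ Y' ∈ 𝒴, ∃ m : ℕ, ∃ c : Fin (m + 1) → Set X,
    (∀ i, c i ∈ 𝒴) ∧ c 0 = Y ∧ c (Fin.last m) = Y' ∧
    ∀ i : Fin m, InfiniteDiam d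
      ({x : X | ∃ y ∈ c i.castSucc, d x y ≤ C} ∩ c i.succ)

/-- The path metric of a graph, as a real-valued distance function on the vertices. -/
noncomputable def graphDist (G : SimpleGraph V) : V → V → ℝ :=
  fun x y => (G.dist x y : ℝ)

/-- The Cayley graph of a group with respect to a generating set `S`: vertices are group
elements, with an edge joining `g` and `g * s` for each `g` and each `s ∈ S \ {1}`. -/
def cayleyGraph (Γ : Type u) [Group Γ] (S : Set Γ) : SimpleGraph Γ :=
  SimpleGraph.fromRel fun g h => ∃ s ∈ S, h = g * s

section FloydBasic

variable {V : Type u} {G : SimpleGraph V} {f : ℕ → ℝ} {b : V}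

lemma floydLength_nonneg (hpos : ∀ n, 0 < f n) {u v : V} (p : G.Walk u v) :
    0 ≤ floydLength G f b p := by
  apply List.sum_nonneg
  intro x hx
  obtain ⟨d, -, rfl⟩ := List.mem_map.1 hx
  exact (hpos _).le

lemma floydDist_le (hpos : ∀ n, 0 < f n) {u v : V} (p : G.Walk u v) :
    floydDist G f b u v ≤ floydLength G f b p :=
  csInf_le ⟨0, by rintro L ⟨q, rfl⟩; exact floydLength_nonneg hpos q⟩ ⟨p, rfl⟩

lemma floydDist_nonneg (hpos : ∀ n, 0 < f n) {u v : V} (h : G.Reachable u v) :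
    0 ≤ floydDist G f b u v :=
  le_csInf ⟨_, h.some, rfl⟩ (by rintro L ⟨q, rfl⟩; exact floydLength_nonneg hpos q)

lemma floydLength_append {u v w : V} (p : G.Walk u v) (q : G.Walk v w) :
    floydLength G f b (p.append q) = floydLength G f b p + floydLength G f b q := by
  simp [floydLength, SimpleGraph.Walk.darts_append]

lemma edgeFloydLength_symm (d : G.Dart) :
    edgeFloydLength G f b d.symm = edgeFloydLength G f b d := by
  simp [edgeFloydLength, SimpleGraph.Dart.symm, min_comm]

lemma floydLength_reverse {u v : V} (p : G.Walk u v) :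
    floydLength G f b p.reverse = floydLength G f b p := by
  rw [floydLength, SimpleGraph.Walk.darts_reverse, List.map_reverse, List.sum_reverse,
    List.map_map]
  simp only [floydLength, Function.comp_def, edgeFloydLength_symm]

lemma floydLength_copy {u v u' v' : V} (p : G.Walk u v) (hu : u = u') (hv : v = v') :
    floydLength G f b (p.copy hu hv) = floydLength G f b p := by
  subst hu; subst hv; rfl

lemma floydLength_le_of_support (hanti : Antitone f) {u v : V} (p : G.Walk u v) (D : ℕ)
    (hD : ∀ x ∈ p.support, D ≤ G.dist b x) :
    floydLength G f b p ≤ (p.length : ℝ) * f D := by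
  have key : ∀ x ∈ p.darts.map (edgeFloydLength G f b), x ≤ f D := by
    rintro x hx
    obtain ⟨d, hd, rfl⟩ := List.mem_map.1 hx
    apply hanti
    exact le_min (hD _ (SimpleGraph.Walk.dart_fst_mem_support_of_mem_darts p hd))
      (hD _ (SimpleGraph.Walk.dart_snd_mem_support_of_mem_darts p hd))
  calc floydLength G f b p ≤ (p.darts.map (edgeFloydLength G f b)).length • f D :=
        List.sum_le_card_nsmul _ _ key
    _ = (p.length : ℝ) * f D := by
        rw [List.length_map, SimpleGraph.Walk.length_darts, nsmul_eq_mul]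

end FloydBasic

section CayleyBasic

variable {Γ : Type u} [Group Γ]

/-- The symmetrization of a generating set. -/
def symS (S : Finset Γ) : Set Γ := {x | x ∈ S ∨ x⁻¹ ∈ S}

lemma symS_inv {S : Finset Γ} {x : Γ} (hx : x ∈ symS S) : x⁻¹ ∈ symS S := by
  rcases hx with h | h
  · exact Or.inr (by simpa using h)
  · exact Or.inl h

lemma cayley_adj_iff {S : Finset Γ} {g h : Γ} :
    (cayleyGraph Γ (S : Set Γ)).Adj g h ↔ g ≠ h ∧ g⁻¹ * h ∈ symS S := by
  rw [cayleyGraph, SimpleGraph.fromRel_adj]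
  constructor
  · rintro ⟨hne, hor⟩
    refine ⟨hne, ?_⟩
    rcases hor with ⟨s, hs, rfl⟩ | ⟨s, hs, he⟩
    · exact Or.inl (by simpa using hs)
    · refine Or.inr ?_
      have : (g⁻¹ * h)⁻¹ = s := by rw [he]; group
      rw [this]; exact hs
  · rintro ⟨hne, hs | hs⟩
    · exact ⟨hne, Or.inl ⟨g⁻¹ * h, hs, by group⟩⟩
    · exact ⟨hne, Or.inr ⟨(g⁻¹ * h)⁻¹, hs, by group⟩⟩

lemma cayley_adj_of {S : Finset Γ} {g h : Γ} (hmem : g⁻¹ * h ∈ symS S) (hne : g ≠ h) :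
    (cayleyGraph Γ (S : Set Γ)).Adj g h :=
  cayley_adj_iff.2 ⟨hne, hmem⟩

lemma cayley_step_of_adj {S : Finset Γ} {g h : Γ}
    (h' : (cayleyGraph Γ (S : Set Γ)).Adj g h) : g⁻¹ * h ∈ symS S :=
  (cayley_adj_iff.1 h').2

/-- Left translation as a graph homomorphism of a Cayley graph. -/
def mulLeftHom (S : Finset Γ) (k : Γ) :
    cayleyGraph Γ (S : Set Γ) →g cayleyGraph Γ (S : Set Γ) where
  toFun x := k * x
  map_rel' := by
    intro a c h
    rw [cayley_adj_iff] at h ⊢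
    refine ⟨fun he => h.1 (mul_left_cancel he), ?_⟩
    have : (k * a)⁻¹ * (k * c) = a⁻¹ * c := by group
    rw [this]; exact h.2

lemma cayley_reachable_mul {S : Finset Γ} {g h : Γ} (k : Γ)
    (hr : (cayleyGraph Γ (S : Set Γ)).Reachable g h) :
    (cayleyGraph Γ (S : Set Γ)).Reachable (k * g) (k * h) :=
  hr.map (mulLeftHom S k)

lemma cayley_dist_mul {S : Finset Γ} (k g h : Γ) :
    (cayleyGraph Γ (S : Set Γ)).dist (k * g) (k * h) = (cayleyGraph Γ (S : Set Γ)).dist g h := by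
  have aux : ∀ (k g h : Γ), (cayleyGraph Γ (S : Set Γ)).dist (k * g) (k * h) ≤
      (cayleyGraph Γ (S : Set Γ)).dist g h := by
    intro k g h
    by_cases hr : (cayleyGraph Γ (S : Set Γ)).Reachable g h
    · obtain ⟨p, hp⟩ := hr.exists_walk_length_eq_dist
      calc (cayleyGraph Γ (S : Set Γ)).dist (k * g) (k * h) ≤ (p.map (mulLeftHom S k)).length :=
            SimpleGraph.dist_le _
        _ = (cayleyGraph Γ (S : Set Γ)).dist g h := by
            rw [SimpleGraph.Walk.length_map, hp]
    · have hnr : ¬ (cayleyGraph Γ (S : Set Γ)).Reachable (k * g) (k * h) := fun hc =>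
        hr (by simpa [inv_mul_cancel_left] using cayley_reachable_mul k⁻¹ hc)
      rw [SimpleGraph.dist_eq_zero_of_not_reachable hr,
        SimpleGraph.dist_eq_zero_of_not_reachable hnr]
  exact le_antisymm (aux k g h)
    (by simpa [inv_mul_cancel_left] using aux k⁻¹ (k * g) (k * h))

end CayleyBasic

section CayleyWords

variable {Γ : Type u} [Group Γ]

lemma exists_walk_word (S : Finset Γ) (w : List Γ) (hw : ∀ l ∈ w, l ∈ symS S) (g : Γ) :
    ∃ p : (cayleyGraph Γ (S : Set Γ)).Walk g (g * w.prod),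
      p.length ≤ w.length ∧ ∀ v ∈ p.support, ∃ u, u <+: w ∧ v = g * u.prod := by
  induction w generalizing g with
  | nil =>
    refine ⟨SimpleGraph.Walk.nil.copy rfl (by rw [List.prod_nil, mul_one]), by rw [SimpleGraph.Walk.length_copy]; simp, ?_⟩
    intro v hv
    rw [SimpleGraph.Walk.support_copy] at hv
    simp only [SimpleGraph.Walk.support_nil, List.mem_singleton] at hv
    exact ⟨[], List.nil_prefix, by simp [hv]⟩
  | cons l w ih =>
    have hcast : (g * l) * w.prod = g * (l :: w).prod := by
      rw [List.prod_cons, mul_assoc]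
    obtain ⟨p, hp1, hp2⟩ := ih (fun x hx => hw x (List.mem_cons_of_mem _ hx)) (g * l)
    by_cases hgl : g * l = g
    · refine ⟨p.copy hgl hcast, ?_, ?_⟩
      · rw [SimpleGraph.Walk.length_copy]
        exact hp1.trans (Nat.le_succ _)
      · intro v hv
        rw [SimpleGraph.Walk.support_copy] at hv
        obtain ⟨u, hu, rfl⟩ := hp2 v hv
        exact ⟨l :: u, List.cons_prefix_cons.2 ⟨rfl, hu⟩, by rw [List.prod_cons, ← mul_assoc]⟩
    · have hadj : (cayleyGraph Γ (S : Set Γ)).Adj g (g * l) :=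
        cayley_adj_of (by simpa [inv_mul_cancel_left] using hw l List.mem_cons_self)
          (fun h => hgl h.symm)
      refine ⟨(SimpleGraph.Walk.cons hadj p).copy rfl hcast, ?_, ?_⟩
      · rw [SimpleGraph.Walk.length_copy, SimpleGraph.Walk.length_cons]
        exact Nat.succ_le_succ hp1
      · intro v hv
        rw [SimpleGraph.Walk.support_copy, SimpleGraph.Walk.support_cons] at hv
        rcases List.mem_cons.1 hv with rfl | hv
        · exact ⟨[], List.nil_prefix, by simp⟩
        · obtain ⟨u, hu, rfl⟩ := hp2 v hv
          exact ⟨l :: u, List.cons_prefix_cons.2 ⟨rfl, hu⟩, by rw [List.prod_cons, ← mul_assoc]⟩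

lemma cayley_dist_word_le (S : Finset Γ) (w : List Γ) (hw : ∀ l ∈ w, l ∈ symS S) (g : Γ) :
    (cayleyGraph Γ (S : Set Γ)).dist g (g * w.prod) ≤ w.length := by
  obtain ⟨p, hp1, -⟩ := exists_walk_word S w hw g
  exact (SimpleGraph.dist_le p).trans hp1

lemma cayley_reachable_one (S : Finset Γ) (hgen : Subgroup.closure (S : Set Γ) = ⊤) (g : Γ) :
    (cayleyGraph Γ (S : Set Γ)).Reachable 1 g := by
  have hg : g ∈ Subgroup.closure (S : Set Γ) := by rw [hgen]; trivial
  induction hg using Subgroup.closure_induction with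
  | mem x hx =>
    by_cases hx1 : (1 : Γ) = x
    · rw [← hx1]
    · exact (cayley_adj_of (by simpa [symS] using Or.inl hx) hx1).reachable
  | one => rfl
  | mul x y hx hy ihx ihy =>
    refine ihx.trans ?_
    have := cayley_reachable_mul (S := S) x ihy
    simpa using this
  | inv x hx ihx =>
    have := cayley_reachable_mul (S := S) x⁻¹ ihx
    simp only [mul_one, inv_mul_cancel] at this
    exact this.symm

lemma cayley_preconnected (S : Finset Γ) (hgen : Subgroup.closure (S : Set Γ) = ⊤) :
    (cayleyGraph Γ (S : Set Γ)).Preconnected := fun u v =>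
  ((cayley_reachable_one S hgen u).symm.trans (cayley_reachable_one S hgen v))

lemma cayley_connected (S : Finset Γ) (hgen : Subgroup.closure (S : Set Γ) = ⊤) :
    (cayleyGraph Γ (S : Set Γ)).Connected := by
  rw [SimpleGraph.connected_iff]
  exact ⟨cayley_preconnected S hgen, ⟨1⟩⟩

/-- Finite sets exhausting balls of the Cayley graph. -/
def ballF (S : Finset Γ) [DecidableEq Γ] : ℕ → Finset Γ
  | 0 => {1}
  | n + 1 => ballF S n ∪ Finset.image₂ (· * ·) (ballF S n) (S ∪ S.image (·⁻¹))

lemma mem_symF {S : Finset Γ} [DecidableEq Γ] {x : Γ} (hx : x ∈ symS S) :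
    x ∈ S ∪ S.image (·⁻¹) := by
  rcases hx with h | h
  · exact Finset.mem_union_left _ h
  · exact Finset.mem_union_right _ (Finset.mem_image.2 ⟨x⁻¹, h, by simp⟩)

lemma one_mem_ballF (S : Finset Γ) [DecidableEq Γ] (n : ℕ) : (1 : Γ) ∈ ballF S n := by
  induction n with
  | zero => simp [ballF]
  | succ n ih => exact Finset.mem_union_left _ ih

lemma mem_ballF_of_walk (S : Finset Γ) [DecidableEq Γ] :
    ∀ (n : ℕ) (g : Γ) (p : (cayleyGraph Γ (S : Set Γ)).Walk g 1), p.length ≤ n →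
      g ∈ ballF S n := by
  intro n
  induction n with
  | zero =>
    intro g p hp
    have := p.eq_of_length_eq_zero (Nat.le_zero.1 hp)
    simp [ballF, this]
  | succ n ih =>
    intro g p hp
    cases p with
    | nil => exact one_mem_ballF S (n + 1)
    | @cons _ v _ hadj q =>
      have hv : v ∈ ballF S n := ih v q (by
        rw [SimpleGraph.Walk.length_cons] at hp; omega)
      have hstep : v⁻¹ * g ∈ symS S := cayley_step_of_adj hadj.symm
      refine Finset.mem_union_right _ (Finset.mem_image₂.2 ⟨v, hv, v⁻¹ * g, mem_symF hstep, ?_⟩)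
      group

lemma mem_ballF_of_dist (S : Finset Γ) [DecidableEq Γ]
    (hgen : Subgroup.closure (S : Set Γ) = ⊤) {g : Γ} {n : ℕ}
    (h : (cayleyGraph Γ (S : Set Γ)).dist 1 g ≤ n) : g ∈ ballF S n := by
  obtain ⟨p, hp⟩ := ((cayley_reachable_one S hgen g).symm).exists_walk_length_eq_dist
  exact mem_ballF_of_walk S n g p (by rw [hp, SimpleGraph.dist_comm]; exact h)

lemma cayley_exists_dist_gt (S : Finset Γ) (hgen : Subgroup.closure (S : Set Γ) = ⊤)
    [Infinite Γ] (n : ℕ) : ∃ g : Γ, n < (cayleyGraph Γ (S : Set Γ)).dist 1 g := by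
  classical
  obtain ⟨g, hg⟩ := Infinite.exists_notMem_finset (ballF S n)
  exact ⟨g, by by_contra h; exact hg (mem_ballF_of_dist S hgen (not_lt.1 h))⟩

end CayleyWords

section GetVert

variable {V : Type u} {G : SimpleGraph V}

lemma dist_getVert_le (hconn : G.Connected) {u v : V} (p : G.Walk u v) (k : ℕ) :
    G.dist u (p.getVert k) ≤ k := by
  induction p generalizing k with
  | nil => simp [SimpleGraph.Walk.getVert, SimpleGraph.dist_self]
  | @cons a c d hadj q ih =>
    cases k with
    | zero => simp [SimpleGraph.Walk.getVert_zero, SimpleGraph.dist_self]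
    | succ k =>
      calc G.dist a ((SimpleGraph.Walk.cons hadj q).getVert (k + 1))
          ≤ G.dist a c + G.dist c (q.getVert k) := hconn.dist_triangle
        _ ≤ 1 + k := by
            gcongr
            · exact (SimpleGraph.dist_eq_one_iff_adj.2 hadj).le
            · exact ih k
        _ = k + 1 := by omega

lemma dist_getVert_end_le (hconn : G.Connected) {u v : V} (p : G.Walk u v) (k : ℕ) :
    G.dist (p.getVert k) v ≤ p.length - k := by
  induction p generalizing k with
  | nil => simp [SimpleGraph.Walk.getVert, SimpleGraph.dist_self]
  | @cons a c d hadj q ih =>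
    cases k with
    | zero =>
      simpa [SimpleGraph.Walk.getVert_zero] using
        (SimpleGraph.dist_le (SimpleGraph.Walk.cons hadj q)).trans (by simp)
    | succ k =>
      have := ih k
      simpa [SimpleGraph.Walk.length_cons, Nat.succ_sub_succ] using this

lemma geodesic_getVert_dist (hconn : G.Connected) {u v : V} (p : G.Walk u v)
    (hp : p.length = G.dist u v) {k : ℕ} (hk : k ≤ p.length) :
    G.dist u (p.getVert k) = k := by
  refine le_antisymm (dist_getVert_le hconn p k) ?_
  have h1 : G.dist u v ≤ G.dist u (p.getVert k) + G.dist (p.getVert k) v := hconn.dist_triangle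
  have h2 : G.dist (p.getVert k) v ≤ p.length - k := dist_getVert_end_le hconn p k
  omega

end GetVert

section CayleyExact

variable {Γ : Type u} [Group Γ]

lemma cayley_exists_dist_eq (S : Finset Γ) (hgen : Subgroup.closure (S : Set Γ) = ⊤)
    [Infinite Γ] (k : ℕ) : ∃ g : Γ, (cayleyGraph Γ (S : Set Γ)).dist 1 g = k := by
  obtain ⟨g, hg⟩ := cayley_exists_dist_gt S hgen k
  obtain ⟨p, hp⟩ := (cayley_reachable_one S hgen g).exists_walk_length_eq_dist
  refine ⟨p.getVert k, geodesic_getVert_dist (cayley_connected S hgen) p hp ?_⟩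
  omega

end CayleyExact

section ProductSetup

variable {A B : Type u} [Group A] [Group B]

/-- Projection of the generating set to the first factor. -/
noncomputable def SA (S : Finset (A × B)) : Finset A :=
  letI := Classical.decEq A; S.image (fun x => x.1)

/-- Projection of the generating set to the second factor. -/
noncomputable def SB (S : Finset (A × B)) : Finset B :=
  letI := Classical.decEq B; S.image (fun x => x.2)

lemma mem_SA {S : Finset (A × B)} {x : A × B} (hx : x ∈ S) : x.1 ∈ SA S := by
  classical
  simp only [SA]
  exact Finset.mem_image.2 ⟨x, hx, rfl⟩

lemma mem_SB {S : Finset (A × B)} {x : A × B} (hx : x ∈ S) : x.2 ∈ SB S := by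
  classical
  simp only [SB]
  exact Finset.mem_image.2 ⟨x, hx, rfl⟩

lemma symS_fst {S : Finset (A × B)} {x : A × B} (hx : x ∈ symS S) : x.1 ∈ symS (SA S) := by
  rcases hx with h | h
  · exact Or.inl (mem_SA h)
  · exact Or.inr (mem_SA h)

lemma symS_snd {S : Finset (A × B)} {x : A × B} (hx : x ∈ symS S) : x.2 ∈ symS (SB S) := by
  rcases hx with h | h
  · exact Or.inl (mem_SB h)
  · exact Or.inr (mem_SB h)

lemma hgenA {S : Finset (A × B)} (hgen : Subgroup.closure (S : Set (A × B)) = ⊤) :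
    Subgroup.closure ((SA S : Finset A) : Set A) = ⊤ := by
  classical
  have hcoe : ((SA S : Finset A) : Set A) = ⇑(MonoidHom.fst A B) '' (S : Set (A × B)) := by
    simp [SA, Finset.coe_image, MonoidHom.coe_fst]
  rw [hcoe, ← MonoidHom.map_closure, hgen]
  rw [← MonoidHom.range_eq_map]
  exact MonoidHom.range_eq_top.2 Prod.fst_surjective

lemma hgenB {S : Finset (A × B)} (hgen : Subgroup.closure (S : Set (A × B)) = ⊤) :
    Subgroup.closure ((SB S : Finset B) : Set B) = ⊤ := by
  classical
  have hcoe : ((SB S : Finset B) : Set B) = ⇑(MonoidHom.snd A B) '' (S : Set (A × B)) := by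
    simp [SB, Finset.coe_image, MonoidHom.coe_snd]
  rw [hcoe, ← MonoidHom.map_closure, hgen]
  rw [← MonoidHom.range_eq_map]
  exact MonoidHom.range_eq_top.2 Prod.snd_surjective

lemma dist_fst_le (S : Finset (A × B)) (hgen : Subgroup.closure (S : Set (A × B)) = ⊤)
    (x y : A × B) :
    (cayleyGraph A ((SA S : Finset A) : Set A)).dist x.1 y.1 ≤
      (cayleyGraph (A × B) (S : Set (A × B))).dist x y := by
  obtain ⟨p, hp⟩ := (cayley_preconnected S hgen x y).exists_walk_length_eq_dist
  rw [← hp]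
  clear hp
  induction p with
  | nil => simp [SimpleGraph.dist_self]
  | @cons a c d hadj q ih =>
    have hstep : a⁻¹ * c ∈ symS S := cayley_step_of_adj hadj
    have h1 : (cayleyGraph A ((SA S : Finset A) : Set A)).dist a.1 c.1 ≤ 1 := by
      by_cases hac : a.1 = c.1
      · rw [hac]; simp [SimpleGraph.dist_self]
      · have : (cayleyGraph A ((SA S : Finset A) : Set A)).Adj a.1 c.1 := by
          refine cayley_adj_of ?_ hac
          have : (a⁻¹ * c).1 = a.1⁻¹ * c.1 := rfl
          rw [← this]
          exact symS_fst hstep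
        exact (SimpleGraph.dist_eq_one_iff_adj.2 this).le
    calc (cayleyGraph A ((SA S : Finset A) : Set A)).dist a.1 d.1
        ≤ _ + _ := (cayley_connected (SA S) (hgenA hgen)).dist_triangle
      _ ≤ 1 + q.length := Nat.add_le_add h1 ih
      _ = (SimpleGraph.Walk.cons hadj q).length := by
          rw [SimpleGraph.Walk.length_cons]; omega

lemma dist_snd_le (S : Finset (A × B)) (hgen : Subgroup.closure (S : Set (A × B)) = ⊤)
    (x y : A × B) :
    (cayleyGraph B ((SB S : Finset B) : Set B)).dist x.2 y.2 ≤
      (cayleyGraph (A × B) (S : Set (A × B))).dist x y := by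
  obtain ⟨p, hp⟩ := (cayley_preconnected S hgen x y).exists_walk_length_eq_dist
  rw [← hp]
  clear hp
  induction p with
  | nil => simp [SimpleGraph.dist_self]
  | @cons a c d hadj q ih =>
    have hstep : a⁻¹ * c ∈ symS S := cayley_step_of_adj hadj
    have h1 : (cayleyGraph B ((SB S : Finset B) : Set B)).dist a.2 c.2 ≤ 1 := by
      by_cases hac : a.2 = c.2
      · rw [hac]; simp [SimpleGraph.dist_self]
      · have : (cayleyGraph B ((SB S : Finset B) : Set B)).Adj a.2 c.2 := by
          refine cayley_adj_of ?_ hac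
          have : (a⁻¹ * c).2 = a.2⁻¹ * c.2 := rfl
          rw [← this]
          exact symS_snd hstep
        exact (SimpleGraph.dist_eq_one_iff_adj.2 this).le
    calc (cayleyGraph B ((SB S : Finset B) : Set B)).dist a.2 d.2
        ≤ _ + _ := (cayley_connected (SB S) (hgenB hgen)).dist_triangle
      _ ≤ 1 + q.length := Nat.add_le_add h1 ih
      _ = (SimpleGraph.Walk.cons hadj q).length := by
          rw [SimpleGraph.Walk.length_cons]; omega

lemma exists_word (S : Finset (A × B)) (hgen : Subgroup.closure (S : Set (A × B)) = ⊤)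
    (γ : A × B) : ∃ l : List (A × B), (∀ y ∈ l, y ∈ symS S) ∧ l.prod = γ := by
  have hγ : γ ∈ (Subgroup.closure (S : Set (A × B))).toSubmonoid := by
    rw [hgen]; trivial
  rw [Subgroup.closure_toSubmonoid] at hγ
  obtain ⟨l, hl, rfl⟩ := Submonoid.exists_list_of_mem_closure hγ
  refine ⟨l, fun y hy => ?_, rfl⟩
  rcases hl y hy with h | h
  · exact Or.inl h
  · exact Or.inr (Set.mem_inv.1 h)

/-- A chosen word in the generators representing a given element. -/
noncomputable def wd (S : Finset (A × B)) (hgen : Subgroup.closure (S : Set (A × B)) = ⊤)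
    (γ : A × B) : List (A × B) :=
  (exists_word S hgen γ).choose

lemma wd_mem (S : Finset (A × B)) (hgen : Subgroup.closure (S : Set (A × B)) = ⊤)
    (γ : A × B) : ∀ y ∈ wd S hgen γ, y ∈ symS S :=
  (exists_word S hgen γ).choose_spec.1

lemma wd_prod (S : Finset (A × B)) (hgen : Subgroup.closure (S : Set (A × B)) = ⊤)
    (γ : A × B) : (wd S hgen γ).prod = γ :=
  (exists_word S hgen γ).choose_spec.2

/-- The basic block constant `Λ`. -/
noncomputable def Lam (S : Finset (A × B)) (hgen : Subgroup.closure (S : Set (A × B)) = ⊤) :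
    ℕ :=
  letI := Classical.decEq A; letI := Classical.decEq B;
  max 1 (Finset.sup
    (((SA S ∪ (SA S).image (·⁻¹)).image (fun t => ((t, 1) : A × B))) ∪
      ((SB S ∪ (SB S).image (·⁻¹)).image (fun t => ((1, t) : A × B))))
    (fun γ => (wd S hgen γ).length))

lemma one_le_Lam (S : Finset (A × B)) (hgen : Subgroup.closure (S : Set (A × B)) = ⊤) :
    1 ≤ Lam S hgen := le_max_left _ _

lemma wd_length_le_A (S : Finset (A × B)) (hgen : Subgroup.closure (S : Set (A × B)) = ⊤)
    {τ : A} (hτ : τ ∈ symS (SA S)) : (wd S hgen (τ, 1)).length ≤ Lam S hgen := by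
  classical
  simp only [Lam]
  refine le_trans (Finset.le_sup (f := fun γ => (wd S hgen γ).length) ?_) (le_max_right _ _)
  exact Finset.mem_union_left _ (Finset.mem_image.2 ⟨τ, mem_symF hτ, rfl⟩)

lemma wd_length_le_B (S : Finset (A × B)) (hgen : Subgroup.closure (S : Set (A × B)) = ⊤)
    {τ : B} (hτ : τ ∈ symS (SB S)) : (wd S hgen ((1 : A), τ)).length ≤ Lam S hgen := by
  classical
  simp only [Lam]
  refine le_trans (Finset.le_sup (f := fun γ => (wd S hgen γ).length) ?_) (le_max_right _ _)
  exact Finset.mem_union_right _ (Finset.mem_image.2 ⟨τ, mem_symF hτ, rfl⟩)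

end ProductSetup

section ProductWalks

variable {A B : Type u} [Group A] [Group B]

lemma exists_horizontal_walk (S : Finset (A × B))
    (hgen : Subgroup.closure (S : Set (A × B)) = ⊤) (α α' : A) (b : B) :
    ∃ p : (cayleyGraph (A × B) (S : Set (A × B))).Walk (α, b) (α', b),
      p.length ≤ Lam S hgen * (cayleyGraph A ((SA S : Finset A) : Set A)).dist α α' ∧
      ∀ v ∈ p.support, (cayleyGraph B ((SB S : Finset B) : Set B)).dist b v.2 ≤ Lam S hgen := by
  obtain ⟨q, hq⟩ := (cayley_preconnected (SA S) (hgenA hgen) α α').exists_walk_length_eq_dist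
  rw [← hq]
  clear hq
  induction q with
  | nil =>
    refine ⟨SimpleGraph.Walk.nil, by simp, ?_⟩
    intro v hv
    simp only [SimpleGraph.Walk.support_nil, List.mem_singleton] at hv
    subst hv
    simp [SimpleGraph.dist_self]
  | @cons a c d hadj q ih =>
    have hτ : a⁻¹ * c ∈ symS (SA S) := cayley_step_of_adj hadj
    set w := wd S hgen ((a⁻¹ * c : A), (1 : B)) with hw
    have hwlen : w.length ≤ Lam S hgen := wd_length_le_A S hgen hτ
    obtain ⟨p₁, hp₁len, hp₁sup⟩ := exists_walk_word S w (wd_mem S hgen _) (a, b)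
    have hend : ((a, b) : A × B) * w.prod = (c, b) := by
      rw [hw, wd_prod]
      ext
      · simp [mul_inv_cancel_left]
      · simp
    obtain ⟨p₂, hp₂len, hp₂sup⟩ := ih
    refine ⟨(p₁.copy rfl hend).append p₂, ?_, ?_⟩
    · rw [SimpleGraph.Walk.length_append, SimpleGraph.Walk.length_copy,
        SimpleGraph.Walk.length_cons]
      have h1 : p₁.length ≤ Lam S hgen := hp₁len.trans hwlen
      nlinarith [hp₂len]
    · intro v hv
      rw [SimpleGraph.Walk.mem_support_append_iff, SimpleGraph.Walk.support_copy] at hv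
      rcases hv with hv | hv
      · obtain ⟨u, hu, rfl⟩ := hp₁sup v hv
        have hz : (((a, b) : A × B) * u.prod).2 = b * (u.prod).2 := rfl
        rw [hz]
        have hdb := cayley_dist_mul (S := SB S) b 1 ((u.prod).2)
        rw [mul_one] at hdb
        rw [hdb]
        have hmap : (u.prod).2 = (u.map (fun y => y.2)).prod := by
          simpa using map_list_prod (MonoidHom.snd A B) u
        have hmem : ∀ y ∈ u.map (fun y => y.2), y ∈ symS (SB S) := by
          intro y hy
          obtain ⟨z, hz', rfl⟩ := List.mem_map.1 hy
          exact symS_snd (wd_mem S hgen _ z (hu.subset hz'))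
        have := cayley_dist_word_le (SB S) (u.map (fun y => y.2)) hmem 1
        rw [one_mul] at this
        rw [hmap]
        refine this.trans ?_
        simpa using hu.sublist.length_le.trans hwlen
      · exact hp₂sup v hv

lemma exists_vertical_walk (S : Finset (A × B))
    (hgen : Subgroup.closure (S : Set (A × B)) = ⊤) (β β' : B) (a : A) :
    ∃ p : (cayleyGraph (A × B) (S : Set (A × B))).Walk (a, β) (a, β'),
      p.length ≤ Lam S hgen * (cayleyGraph B ((SB S : Finset B) : Set B)).dist β β' ∧
      ∀ v ∈ p.support, (cayleyGraph A ((SA S : Finset A) : Set A)).dist a v.1 ≤ Lam S hgen := by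
  obtain ⟨q, hq⟩ := (cayley_preconnected (SB S) (hgenB hgen) β β').exists_walk_length_eq_dist
  rw [← hq]
  clear hq
  induction q with
  | nil =>
    refine ⟨SimpleGraph.Walk.nil, by simp, ?_⟩
    intro v hv
    simp only [SimpleGraph.Walk.support_nil, List.mem_singleton] at hv
    subst hv
    simp [SimpleGraph.dist_self]
  | @cons c e d hadj q ih =>
    have hτ : c⁻¹ * e ∈ symS (SB S) := cayley_step_of_adj hadj
    set w := wd S hgen ((1 : A), (c⁻¹ * e : B)) with hw
    have hwlen : w.length ≤ Lam S hgen := wd_length_le_B S hgen hτ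
    obtain ⟨p₁, hp₁len, hp₁sup⟩ := exists_walk_word S w (wd_mem S hgen _) (a, c)
    have hend : ((a, c) : A × B) * w.prod = (a, e) := by
      rw [hw, wd_prod]
      ext
      · simp
      · simp [mul_inv_cancel_left]
    obtain ⟨p₂, hp₂len, hp₂sup⟩ := ih
    refine ⟨(p₁.copy rfl hend).append p₂, ?_, ?_⟩
    · rw [SimpleGraph.Walk.length_append, SimpleGraph.Walk.length_copy,
        SimpleGraph.Walk.length_cons]
      have h1 : p₁.length ≤ Lam S hgen := hp₁len.trans hwlen
      nlinarith [hp₂len]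
    · intro v hv
      rw [SimpleGraph.Walk.mem_support_append_iff, SimpleGraph.Walk.support_copy] at hv
      rcases hv with hv | hv
      · obtain ⟨u, hu, rfl⟩ := hp₁sup v hv
        have hz : (((a, c) : A × B) * u.prod).1 = a * (u.prod).1 := rfl
        rw [hz]
        have hdb := cayley_dist_mul (S := SA S) a 1 ((u.prod).1)
        rw [mul_one] at hdb
        rw [hdb]
        have hmap : (u.prod).1 = (u.map (fun y => y.1)).prod := by
          simpa using map_list_prod (MonoidHom.fst A B) u
        have hmem : ∀ y ∈ u.map (fun y => y.1), y ∈ symS (SA S) := by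
          intro y hy
          obtain ⟨z, hz', rfl⟩ := List.mem_map.1 hy
          exact symS_fst (wd_mem S hgen _ z (hu.subset hz'))
        have := cayley_dist_word_le (SA S) (u.map (fun y => y.1)) hmem 1
        rw [one_mul] at this
        rw [hmap]
        refine this.trans ?_
        simpa using hu.sublist.length_le.trans hwlen
      · exact hp₂sup v hv

lemma dist_one_le_sum (S : Finset (A × B)) (hgen : Subgroup.closure (S : Set (A × B)) = ⊤)
    (x : A × B) :
    (cayleyGraph (A × B) (S : Set (A × B))).dist 1 x ≤
      Lam S hgen * ((cayleyGraph A ((SA S : Finset A) : Set A)).dist 1 x.1 +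
        (cayleyGraph B ((SB S : Finset B) : Set B)).dist 1 x.2) := by
  obtain ⟨p₁, hp₁, -⟩ := exists_horizontal_walk S hgen 1 x.1 1
  obtain ⟨p₂, hp₂, -⟩ := exists_vertical_walk S hgen 1 x.2 x.1
  have h1 : ((1, 1) : A × B) = 1 := rfl
  have h2 : ((x.1, x.2) : A × B) = x := rfl
  calc (cayleyGraph (A × B) (S : Set (A × B))).dist 1 x
      ≤ ((p₁.copy h1 rfl).append (p₂.copy rfl h2)).length := SimpleGraph.dist_le _
    _ ≤ _ := by
        rw [SimpleGraph.Walk.length_append, SimpleGraph.Walk.length_copy,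
          SimpleGraph.Walk.length_copy, Nat.mul_add]
        exact Nat.add_le_add hp₁ hp₂

end ProductWalks

section Tails

variable {f : ℕ → ℝ}

lemma floyd_antitone (hf : IsFloydFunction f) : Antitone f := by
  have h : ∀ n, f (n + 1) ≤ f n := by
    intro n
    cases n with
    | zero => rw [hf.zero_eq]
    | succ n =>
      obtain ⟨K, hK1, hK⟩ := hf.ratio
      have h2 := (hK (n + 1) (by omega)).1
      have hpos := hf.pos (n + 2)
      rw [le_div_iff₀ hpos] at h2
      linarith
  exact antitone_nat_of_succ_le h

lemma floyd_summable (hf : IsFloydFunction f) : Summable f :=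
  (summable_nat_add_iff 1).1 hf.summable

/-- The tail sum of a Floyd function. -/
noncomputable def tailSum (f : ℕ → ℝ) (s : ℕ) : ℝ := ∑' n, f (n + s)

lemma summable_shift (hf : IsFloydFunction f) (s : ℕ) : Summable (fun n => f (n + s)) :=
  (summable_nat_add_iff s).2 (floyd_summable hf)

lemma tailSum_nonneg (hf : IsFloydFunction f) (s : ℕ) : 0 ≤ tailSum f s :=
  tsum_nonneg fun n => (hf.pos _).le

lemma tailSum_anti (hf : IsFloydFunction f) {s t : ℕ} (hst : s ≤ t) :
    tailSum f t ≤ tailSum f s :=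
  Summable.tsum_le_tsum (fun n => floyd_antitone hf (by omega)) (summable_shift hf t)
    (summable_shift hf s)

lemma sum_range_le_tailSum (hf : IsFloydFunction f) (s n : ℕ) :
    ∑ i ∈ Finset.range n, f (i + s) ≤ tailSum f s :=
  Summable.sum_le_tsum _ (fun i _ => (hf.pos _).le) (summable_shift hf s)

lemma mul_f_le_tailSum (hf : IsFloydFunction f) {m s : ℕ} (h1 : 1 ≤ s) (h2 : 2 * s ≤ m) :
    (m : ℝ) * f m ≤ 2 * tailSum f s := by
  have hfm : 0 ≤ f m := (hf.pos m).le
  have hcard : (m : ℝ) ≤ 2 * ((m - s : ℕ) : ℝ) := by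
    have : m ≤ 2 * (m - s) := by omega
    exact_mod_cast this
  have hsum : ((m - s : ℕ) : ℝ) * f m ≤ tailSum f s := by
    have hterm : ∀ i ∈ Finset.range (m - s), f m ≤ f (i + s) := by
      intro i hi
      rw [Finset.mem_range] at hi
      exact floyd_antitone hf (by omega)
    calc ((m - s : ℕ) : ℝ) * f m = ∑ _i ∈ Finset.range (m - s), f m := by
          rw [Finset.sum_const, Finset.card_range, nsmul_eq_mul]
      _ ≤ ∑ i ∈ Finset.range (m - s), f (i + s) := Finset.sum_le_sum hterm
      _ ≤ tailSum f s := sum_range_le_tailSum hf s _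
  nlinarith

lemma tailSum_tendsto (f : ℕ → ℝ) : Filter.Tendsto (tailSum f) atTop (nhds 0) :=
  tendsto_sum_nat_add f

end Tails

section Legs

variable {A B : Type u} [Group A] [Group B] {f : ℕ → ℝ}

lemma horizontal_leg (S : Finset (A × B)) (hgen : Subgroup.closure (S : Set (A × B)) = ⊤)
    (hf : IsFloydFunction f) (α α' : A) (b : B) :
    ∃ p : (cayleyGraph (A × B) (S : Set (A × B))).Walk (α, b) (α', b),
      floydLength (cayleyGraph (A × B) (S : Set (A × B))) f 1 p ≤
        ((Lam S hgen * (cayleyGraph A ((SA S : Finset A) : Set A)).dist α α' : ℕ) : ℝ) *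
          f ((cayleyGraph B ((SB S : Finset B) : Set B)).dist 1 b - Lam S hgen) := by
  obtain ⟨p, hplen, hpsup⟩ := exists_horizontal_walk S hgen α α' b
  refine ⟨p, ?_⟩
  have hD : ∀ v ∈ p.support,
      (cayleyGraph B ((SB S : Finset B) : Set B)).dist 1 b - Lam S hgen ≤
        (cayleyGraph (A × B) (S : Set (A × B))).dist 1 v := by
    intro v hv
    have h1 : (cayleyGraph B ((SB S : Finset B) : Set B)).dist 1 v.2 ≤
        (cayleyGraph (A × B) (S : Set (A × B))).dist 1 v := dist_snd_le S hgen 1 v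
    have htr : (cayleyGraph B ((SB S : Finset B) : Set B)).dist 1 b ≤
        (cayleyGraph B ((SB S : Finset B) : Set B)).dist 1 v.2 +
          (cayleyGraph B ((SB S : Finset B) : Set B)).dist v.2 b :=
      (cayley_connected (SB S) (hgenB hgen)).dist_triangle
    have h2 : (cayleyGraph B ((SB S : Finset B) : Set B)).dist v.2 b ≤ Lam S hgen := by
      rw [SimpleGraph.dist_comm]; exact hpsup v hv
    omega
  calc floydLength (cayleyGraph (A × B) (S : Set (A × B))) f 1 p
      ≤ (p.length : ℝ) * f _ := floydLength_le_of_support (floyd_antitone hf) p _ hD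
    _ ≤ _ := mul_le_mul_of_nonneg_right (by exact_mod_cast hplen) (hf.pos _).le

lemma vertical_leg (S : Finset (A × B)) (hgen : Subgroup.closure (S : Set (A × B)) = ⊤)
    (hf : IsFloydFunction f) (β β' : B) (a : A) :
    ∃ p : (cayleyGraph (A × B) (S : Set (A × B))).Walk (a, β) (a, β'),
      floydLength (cayleyGraph (A × B) (S : Set (A × B))) f 1 p ≤
        ((Lam S hgen * (cayleyGraph B ((SB S : Finset B) : Set B)).dist β β' : ℕ) : ℝ) *
          f ((cayleyGraph A ((SA S : Finset A) : Set A)).dist 1 a - Lam S hgen) := by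
  obtain ⟨p, hplen, hpsup⟩ := exists_vertical_walk S hgen β β' a
  refine ⟨p, ?_⟩
  have hD : ∀ v ∈ p.support,
      (cayleyGraph A ((SA S : Finset A) : Set A)).dist 1 a - Lam S hgen ≤
        (cayleyGraph (A × B) (S : Set (A × B))).dist 1 v := by
    intro v hv
    have h1 : (cayleyGraph A ((SA S : Finset A) : Set A)).dist 1 v.1 ≤
        (cayleyGraph (A × B) (S : Set (A × B))).dist 1 v := dist_fst_le S hgen 1 v
    have htr : (cayleyGraph A ((SA S : Finset A) : Set A)).dist 1 a ≤
        (cayleyGraph A ((SA S : Finset A) : Set A)).dist 1 v.1 +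
          (cayleyGraph A ((SA S : Finset A) : Set A)).dist v.1 a :=
      (cayley_connected (SA S) (hgenA hgen)).dist_triangle
    have h2 : (cayleyGraph A ((SA S : Finset A) : Set A)).dist v.1 a ≤ Lam S hgen := by
      rw [SimpleGraph.dist_comm]; exact hpsup v hv
    omega
  calc floydLength (cayleyGraph (A × B) (S : Set (A × B))) f 1 p
      ≤ (p.length : ℝ) * f _ := floydLength_le_of_support (floyd_antitone hf) p _ hD
    _ ≤ _ := mul_le_mul_of_nonneg_right (by exact_mod_cast hplen) (hf.pos _).le

end Legs

section Ladder

variable {A B : Type u} [Group A] [Group B] {f : ℕ → ℝ}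

lemma ladder (S : Finset (A × B)) (hgen : Subgroup.closure (S : Set (A × B)) = ⊤)
    (hf : IsFloydFunction f) {M : ℕ} {αt : A} {βt : B}
    (qA : (cayleyGraph A ((SA S : Finset A) : Set A)).Walk 1 αt)
    (hqA : qA.length = (cayleyGraph A ((SA S : Finset A) : Set A)).dist 1 αt)
    (hMA : qA.length = M)
    (qB : (cayleyGraph B ((SB S : Finset B) : Set B)).Walk 1 βt)
    (hqB : qB.length = (cayleyGraph B ((SB S : Finset B) : Set B)).dist 1 βt)
    (hMB : qB.length = M) :
    ∀ k n, n + k = M →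
      ∃ p : (cayleyGraph (A × B) (S : Set (A × B))).Walk (qA.getVert n, qB.getVert n) (αt, βt),
        floydLength (cayleyGraph (A × B) (S : Set (A × B))) f 1 p ≤
          2 * (Lam S hgen : ℝ) * ∑ i ∈ Finset.Ico n M, f (i - Lam S hgen) := by
  intro k
  induction k with
  | zero =>
    intro n hn
    have hnM : n = M := by omega
    have h1 : qA.getVert n = αt := by
      rw [show n = qA.length by omega]; exact qA.getVert_length
    have h2 : qB.getVert n = βt := by
      rw [show n = qB.length by omega]; exact qB.getVert_length
    refine ⟨SimpleGraph.Walk.nil.copy rfl (by rw [h1, h2]), ?_⟩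
    rw [floydLength_copy]
    have : floydLength (cayleyGraph (A × B) (S : Set (A × B))) f 1
        (SimpleGraph.Walk.nil (u := (qA.getVert n, qB.getVert n))) = 0 := rfl
    rw [this, hnM, Finset.Ico_self, Finset.sum_empty, mul_zero]
  | succ k ih =>
    intro n hn
    have hnM : n < M := by omega
    have hadjA : (cayleyGraph A ((SA S : Finset A) : Set A)).Adj (qA.getVert n)
        (qA.getVert (n + 1)) := qA.adj_getVert_succ (by omega)
    have hdA : (cayleyGraph A ((SA S : Finset A) : Set A)).dist (qA.getVert n)
        (qA.getVert (n + 1)) = 1 := SimpleGraph.dist_eq_one_iff_adj.2 hadjA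
    have hadjB : (cayleyGraph B ((SB S : Finset B) : Set B)).Adj (qB.getVert n)
        (qB.getVert (n + 1)) := qB.adj_getVert_succ (by omega)
    have hdB : (cayleyGraph B ((SB S : Finset B) : Set B)).dist (qB.getVert n)
        (qB.getVert (n + 1)) = 1 := SimpleGraph.dist_eq_one_iff_adj.2 hadjB
    have hNA : (cayleyGraph A ((SA S : Finset A) : Set A)).dist 1 (qA.getVert (n + 1)) =
        n + 1 := geodesic_getVert_dist (cayley_connected (SA S) (hgenA hgen)) qA hqA
          (by omega)
    have hNB : (cayleyGraph B ((SB S : Finset B) : Set B)).dist 1 (qB.getVert n) = n :=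
      geodesic_getVert_dist (cayley_connected (SB S) (hgenB hgen)) qB hqB (by omega)
    obtain ⟨p₁, hp₁⟩ := horizontal_leg S hgen hf (qA.getVert n) (qA.getVert (n + 1))
      (qB.getVert n)
    obtain ⟨p₂, hp₂⟩ := vertical_leg S hgen hf (qB.getVert n) (qB.getVert (n + 1))
      (qA.getVert (n + 1))
    obtain ⟨p₃, hp₃⟩ := ih (n + 1) (by omega)
    refine ⟨p₁.append (p₂.append p₃), ?_⟩
    rw [floydLength_append, floydLength_append]
    rw [hdA, hNB] at hp₁
    rw [hdB, hNA] at hp₂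
    have hL0 : (0 : ℝ) ≤ (Lam S hgen : ℝ) := Nat.cast_nonneg _
    have hb₁ : floydLength (cayleyGraph (A × B) (S : Set (A × B))) f 1 p₁ ≤
        (Lam S hgen : ℝ) * f (n - Lam S hgen) := by
      refine hp₁.trans ?_
      rw [Nat.mul_one]
    have hb₂ : floydLength (cayleyGraph (A × B) (S : Set (A × B))) f 1 p₂ ≤
        (Lam S hgen : ℝ) * f (n - Lam S hgen) := by
      refine hp₂.trans ?_
      rw [Nat.mul_one]
      exact mul_le_mul_of_nonneg_left
        (floyd_antitone hf (by omega : n - Lam S hgen ≤ n + 1 - Lam S hgen)) hL0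
    have hsum : ∑ i ∈ Finset.Ico n M, f (i - Lam S hgen) =
        f (n - Lam S hgen) + ∑ i ∈ Finset.Ico (n + 1) M, f (i - Lam S hgen) :=
      Finset.sum_eq_sum_Ico_succ_bot hnM _
    rw [hsum]
    linarith [hp₃]

end Ladder

section Ascent

variable {A B : Type u} [Group A] [Group B] {f : ℕ → ℝ}

lemma ascent (S : Finset (A × B)) (hgen : Subgroup.closure (S : Set (A × B)) = ⊤)
    (hf : IsFloydFunction f) (s : ℕ) (hs1 : 1 ≤ s) (hsL : 2 * Lam S hgen ≤ s)
    (x : A × B)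
    (hm : 4 * s ≤ max ((cayleyGraph A ((SA S : Finset A) : Set A)).dist 1 x.1)
      ((cayleyGraph B ((SB S : Finset B) : Set B)).dist 1 x.2))
    {M : ℕ} {αt : A} {βt : B}
    (qA : (cayleyGraph A ((SA S : Finset A) : Set A)).Walk 1 αt)
    (hqA : qA.length = (cayleyGraph A ((SA S : Finset A) : Set A)).dist 1 αt)
    (hMA : qA.length = M)
    (qB : (cayleyGraph B ((SB S : Finset B) : Set B)).Walk 1 βt)
    (hqB : qB.length = (cayleyGraph B ((SB S : Finset B) : Set B)).dist 1 βt)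
    (hMB : qB.length = M)
    (hM : max ((cayleyGraph A ((SA S : Finset A) : Set A)).dist 1 x.1)
      ((cayleyGraph B ((SB S : Finset B) : Set B)).dist 1 x.2) ≤ M) :
    ∃ p : (cayleyGraph (A × B) (S : Set (A × B))).Walk x (αt, βt),
      floydLength (cayleyGraph (A × B) (S : Set (A × B))) f 1 p ≤
        18 * (Lam S hgen : ℝ) * tailSum f s := by
  set L := Lam S hgen with hLdef
  set m := max ((cayleyGraph A ((SA S : Finset A) : Set A)).dist 1 x.1)
    ((cayleyGraph B ((SB S : Finset B) : Set B)).dist 1 x.2) with hmdef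
  have hLs : L ≤ s := by omega
  have hNαm : (cayleyGraph A ((SA S : Finset A) : Set A)).dist 1 (qA.getVert m) = m :=
    geodesic_getVert_dist (cayley_connected (SA S) (hgenA hgen)) qA hqA (by omega)
  have hNβm : (cayleyGraph B ((SB S : Finset B) : Set B)).dist 1 (qB.getVert m) = m :=
    geodesic_getVert_dist (cayley_connected (SB S) (hgenB hgen)) qB hqB (by omega)
  obtain ⟨p₃, hp₃⟩ := ladder S hgen hf qA hqA hMA qB hqB hMB (M - m) m (by omega)
  have hL0 : (0 : ℝ) ≤ (L : ℝ) := Nat.cast_nonneg _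
  have hlad : ∑ i ∈ Finset.Ico m M, f (i - L) ≤ tailSum f s := by
    rw [Finset.sum_Ico_eq_sum_range]
    have hcongr : ∀ i ∈ Finset.range (M - m), f (m + i - L) = f (i + (m - L)) := by
      intro i _
      congr 1
      omega
    rw [Finset.sum_congr rfl hcongr]
    exact (sum_range_le_tailSum hf _ _).trans (tailSum_anti hf (by omega))
  have hmf : (m : ℝ) * f (m - L) ≤ 4 * tailSum f s := by
    have h2 : 2 * s ≤ m - L := by omega
    have h3 := mul_f_le_tailSum hf hs1 h2
    have hm2 : (m : ℝ) ≤ 2 * ((m - L : ℕ) : ℝ) := by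
      have : m ≤ 2 * (m - L) := by omega
      exact_mod_cast this
    have hprod := mul_le_mul_of_nonneg_right hm2 ((hf.pos (m - L)).le)
    linarith
  have htail0 := tailSum_nonneg hf s
  have hfm0 := (hf.pos (m - L)).le
  -- distances to the hub
  have hdax : (cayleyGraph A ((SA S : Finset A) : Set A)).dist x.1 (qA.getVert m) ≤ 2 * m := by
    have htr : (cayleyGraph A ((SA S : Finset A) : Set A)).dist x.1 (qA.getVert m) ≤
        (cayleyGraph A ((SA S : Finset A) : Set A)).dist x.1 1 +
          (cayleyGraph A ((SA S : Finset A) : Set A)).dist 1 (qA.getVert m) :=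
      (cayley_connected (SA S) (hgenA hgen)).dist_triangle
    have h1 : (cayleyGraph A ((SA S : Finset A) : Set A)).dist x.1 1 ≤ m := by
      rw [SimpleGraph.dist_comm]; omega
    omega
  have hdbx : (cayleyGraph B ((SB S : Finset B) : Set B)).dist x.2 (qB.getVert m) ≤ 2 * m := by
    have htr : (cayleyGraph B ((SB S : Finset B) : Set B)).dist x.2 (qB.getVert m) ≤
        (cayleyGraph B ((SB S : Finset B) : Set B)).dist x.2 1 +
          (cayleyGraph B ((SB S : Finset B) : Set B)).dist 1 (qB.getVert m) :=
      (cayley_connected (SB S) (hgenB hgen)).dist_triangle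
    have h1 : (cayleyGraph B ((SB S : Finset B) : Set B)).dist x.2 1 ≤ m := by
      rw [SimpleGraph.dist_comm]; omega
    omega
  rcases le_total ((cayleyGraph A ((SA S : Finset A) : Set A)).dist 1 x.1)
      ((cayleyGraph B ((SB S : Finset B) : Set B)).dist 1 x.2) with hc | hc
  · -- the B-coordinate is the large one
    have hmeq : (cayleyGraph B ((SB S : Finset B) : Set B)).dist 1 x.2 = m := by omega
    obtain ⟨p₁, hp₁⟩ := horizontal_leg S hgen hf x.1 (qA.getVert m) x.2
    obtain ⟨p₂, hp₂⟩ := vertical_leg S hgen hf x.2 (qB.getVert m) (qA.getVert m)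
    rw [hmeq] at hp₁
    rw [hNαm] at hp₂
    refine ⟨p₁.append (p₂.append p₃), ?_⟩
    rw [floydLength_append, floydLength_append]
    have hb₁ : floydLength (cayleyGraph (A × B) (S : Set (A × B))) f 1 p₁ ≤
        (L : ℝ) * (2 * m) * f (m - L) := by
      refine hp₁.trans ?_
      have : ((L * (cayleyGraph A ((SA S : Finset A) : Set A)).dist x.1 (qA.getVert m) : ℕ) : ℝ)
          ≤ (L : ℝ) * (2 * m) := by
        have := Nat.mul_le_mul_left L hdax
        exact_mod_cast this
      exact mul_le_mul_of_nonneg_right this hfm0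
    have hb₂ : floydLength (cayleyGraph (A × B) (S : Set (A × B))) f 1 p₂ ≤
        (L : ℝ) * (2 * m) * f (m - L) := by
      refine hp₂.trans ?_
      have : ((L * (cayleyGraph B ((SB S : Finset B) : Set B)).dist x.2 (qB.getVert m) : ℕ) : ℝ)
          ≤ (L : ℝ) * (2 * m) := by
        have := Nat.mul_le_mul_left L hdbx
        exact_mod_cast this
      exact mul_le_mul_of_nonneg_right this hfm0
    have hb₃ : floydLength (cayleyGraph (A × B) (S : Set (A × B))) f 1 p₃ ≤
        2 * (L : ℝ) * tailSum f s :=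
      hp₃.trans (by
        have := mul_le_mul_of_nonneg_left hlad (by linarith : (0:ℝ) ≤ 2 * (L : ℝ))
        linarith)
    have hkey := mul_le_mul_of_nonneg_left hmf hL0
    linarith [hb₁, hb₂, hb₃]
  · -- the A-coordinate is the large one
    have hmeq : (cayleyGraph A ((SA S : Finset A) : Set A)).dist 1 x.1 = m := by omega
    obtain ⟨p₁, hp₁⟩ := vertical_leg S hgen hf x.2 (qB.getVert m) x.1
    obtain ⟨p₂, hp₂⟩ := horizontal_leg S hgen hf x.1 (qA.getVert m) (qB.getVert m)
    rw [hmeq] at hp₁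
    rw [hNβm] at hp₂
    refine ⟨p₁.append (p₂.append p₃), ?_⟩
    rw [floydLength_append, floydLength_append]
    have hb₁ : floydLength (cayleyGraph (A × B) (S : Set (A × B))) f 1 p₁ ≤
        (L : ℝ) * (2 * m) * f (m - L) := by
      refine hp₁.trans ?_
      have : ((L * (cayleyGraph B ((SB S : Finset B) : Set B)).dist x.2 (qB.getVert m) : ℕ) : ℝ)
          ≤ (L : ℝ) * (2 * m) := by
        have := Nat.mul_le_mul_left L hdbx
        exact_mod_cast this
      exact mul_le_mul_of_nonneg_right this hfm0
    have hb₂ : floydLength (cayleyGraph (A × B) (S : Set (A × B))) f 1 p₂ ≤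
        (L : ℝ) * (2 * m) * f (m - L) := by
      refine hp₂.trans ?_
      have : ((L * (cayleyGraph A ((SA S : Finset A) : Set A)).dist x.1 (qA.getVert m) : ℕ) : ℝ)
          ≤ (L : ℝ) * (2 * m) := by
        have := Nat.mul_le_mul_left L hdax
        exact_mod_cast this
      exact mul_le_mul_of_nonneg_right this hfm0
    have hb₃ : floydLength (cayleyGraph (A × B) (S : Set (A × B))) f 1 p₃ ≤
        2 * (L : ℝ) * tailSum f s :=
      hp₃.trans (by
        have := mul_le_mul_of_nonneg_left hlad (by linarith : (0:ℝ) ≤ 2 * (L : ℝ))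
        linarith)
    have hkey := mul_le_mul_of_nonneg_left hmf hL0
    linarith [hb₁, hb₂, hb₃]

end Ascent

section MainEstimate

variable {A B : Type u} [Group A] [Group B] {f : ℕ → ℝ}

lemma main_estimate [Infinite A] [Infinite B] (S : Finset (A × B))
    (hgen : Subgroup.closure (S : Set (A × B)) = ⊤) (hf : IsFloydFunction f)
    (ε : ℝ) (hε : 0 < ε) :
    ∃ R : ℕ, ∀ x y : A × B,
      R ≤ (cayleyGraph (A × B) (S : Set (A × B))).dist 1 x →
      R ≤ (cayleyGraph (A × B) (S : Set (A × B))).dist 1 y →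
      floydDist (cayleyGraph (A × B) (S : Set (A × B))) f 1 x y < ε := by
  set L := Lam S hgen with hLdef
  have hL1 : 1 ≤ L := one_le_Lam S hgen
  have hL0 : (0 : ℝ) < (L : ℝ) := by exact_mod_cast hL1
  have hεL : (0 : ℝ) < ε / (37 * L) := by positivity
  obtain ⟨s, hs⟩ := (((tailSum_tendsto f).eventually_lt_const hεL).and
    (eventually_ge_atTop (max 1 (2 * L)))).exists
  obtain ⟨hs1, hsL⟩ : 1 ≤ s ∧ 2 * L ≤ s := by
    constructor <;> [exact le_trans (le_max_left _ _) hs.2; exact le_trans (le_max_right _ _) hs.2]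
  refine ⟨8 * L * s, ?_⟩
  intro x y hx hy
  set mx := max ((cayleyGraph A ((SA S : Finset A) : Set A)).dist 1 x.1)
    ((cayleyGraph B ((SB S : Finset B) : Set B)).dist 1 x.2) with hmxdef
  set my := max ((cayleyGraph A ((SA S : Finset A) : Set A)).dist 1 y.1)
    ((cayleyGraph B ((SB S : Finset B) : Set B)).dist 1 y.2) with hmydef
  have hmx : 4 * s ≤ mx := by
    have h1 := dist_one_le_sum S hgen x
    have h2 : (cayleyGraph (A × B) (S : Set (A × B))).dist 1 x ≤ L * (2 * mx) :=
      h1.trans (Nat.mul_le_mul_left L (by omega))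
    have h3 : L * (8 * s) ≤ L * (2 * mx) := by
      calc L * (8 * s) = 8 * L * s := by ring
        _ ≤ _ := le_trans hx h2
    have := Nat.le_of_mul_le_mul_left h3 (by omega : 0 < L)
    omega
  have hmy : 4 * s ≤ my := by
    have h1 := dist_one_le_sum S hgen y
    have h2 : (cayleyGraph (A × B) (S : Set (A × B))).dist 1 y ≤ L * (2 * my) :=
      h1.trans (Nat.mul_le_mul_left L (by omega))
    have h3 : L * (8 * s) ≤ L * (2 * my) := by
      calc L * (8 * s) = 8 * L * s := by ring
        _ ≤ _ := le_trans hy h2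
    have := Nat.le_of_mul_le_mul_left h3 (by omega : 0 < L)
    omega
  set M := max mx my with hMdef
  obtain ⟨αt, hαt⟩ := cayley_exists_dist_eq (SA S) (hgenA hgen) M
  obtain ⟨βt, hβt⟩ := cayley_exists_dist_eq (SB S) (hgenB hgen) M
  obtain ⟨qA, hqA⟩ := (cayley_reachable_one (SA S) (hgenA hgen) αt).exists_walk_length_eq_dist
  obtain ⟨qB, hqB⟩ := (cayley_reachable_one (SB S) (hgenB hgen) βt).exists_walk_length_eq_dist
  have hMA : qA.length = M := by rw [hqA, hαt]
  have hMB : qB.length = M := by rw [hqB, hβt]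
  obtain ⟨px, hpx⟩ := ascent S hgen hf s hs1 hsL x hmx qA hqA hMA qB hqB hMB (le_max_left _ _)
  obtain ⟨py, hpy⟩ := ascent S hgen hf s hs1 hsL y hmy qA hqA hMA qB hqB hMB (le_max_right _ _)
  have hd := floydDist_le (b := (1 : A × B)) hf.pos (px.append py.reverse)
  rw [floydLength_append, floydLength_reverse] at hd
  have htail0 := tailSum_nonneg hf s
  calc floydDist (cayleyGraph (A × B) (S : Set (A × B))) f 1 x y
      ≤ _ := hd
    _ ≤ 36 * (L : ℝ) * tailSum f s := by linarith [hpx, hpy]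
    _ < ε := by
        have h36 : 36 * (L : ℝ) * tailSum f s < 36 * L * (ε / (37 * L)) := by
          by_cases h0 : tailSum f s < ε / (37 * L)
          · have := mul_lt_mul_of_pos_left h0 (by positivity : (0:ℝ) < 36 * L)
            linarith
          · exact absurd hs.1 h0
        have : 36 * (L : ℝ) * (ε / (37 * L)) = (36 / 37) * ε := by
          field_simp
        rw [this] at h36
        linarith
end MainEstimate

/-- Let `A` and `B` be infinite finitely generated groups and let `G = A × B` with a finite
generating set `S`. Then for every Floyd function `f` the Floyd boundary of the Cayley graph
`Cay(G,S)`, based at the identity, consists of exactly one point. -/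
theorem floyd_boundary_of_product_one_point
    {A B : Type u} [Group A] [Group B] [Infinite A] [Infinite B]
    (S : Finset (A × B)) (hgen : Subgroup.closure (S : Set (A × B)) = ⊤)
    (f : ℕ → ℝ) (hf : IsFloydFunction f) :
    FloydBoundaryOnePoint (cayleyGraph (A × B) (S : Set (A × B))) f 1 := by
  choose σ hσ using cayley_exists_dist_gt S hgen
  have hesc : Escapes (cayleyGraph (A × B) (S : Set (A × B))) 1 σ := fun n =>
    ⟨n, fun m hm => lt_of_le_of_lt hm (hσ m)⟩
  have hcauchy : IsFloydCauchy (cayleyGraph (A × B) (S : Set (A × B))) f 1 σ := by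
    intro ε hε
    obtain ⟨R, hR⟩ := main_estimate S hgen hf ε hε
    exact ⟨R, fun m n hm hn =>
      hR _ _ (lt_of_le_of_lt hm (hσ m)).le (lt_of_le_of_lt hn (hσ n)).le⟩
  refine ⟨Quot.mk _ ⟨σ, hcauchy, hesc⟩, ?_⟩
  intro q
  induction q using Quot.ind with
  | _ t =>
    apply Quot.sound
    show Filter.Tendsto _ atTop (nhds 0)
    rw [Metric.tendsto_atTop]
    intro ε hε
    obtain ⟨R, hR⟩ := main_estimate S hgen hf ε hε
    obtain ⟨N₁, hN₁⟩ := t.2.2 R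
    refine ⟨max N₁ R, fun n hn => ?_⟩
    have h1 : R ≤ (cayleyGraph (A × B) (S : Set (A × B))).dist 1 (t.1 n) :=
      (hN₁ n (le_trans (le_max_left _ _) hn)).le
    have h2 : R ≤ (cayleyGraph (A × B) (S : Set (A × B))).dist 1 (σ n) :=
      (lt_of_le_of_lt (le_trans (le_max_right _ _) hn) (hσ n)).le
    have h0 : 0 ≤ floydDist (cayleyGraph (A × B) (S : Set (A × B))) f 1 (t.1 n) (σ n) :=
      floydDist_nonneg hf.pos (cayley_preconnected S hgen _ _)
    rw [Real.dist_eq, sub_zero, abs_of_nonneg h0]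
    exact hR _ _ h1 h2

end FloydPaper
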